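/- arXiv:1007.5344 — 6 statements merged into one kernel-verified Lean document; each statement's English description precedes it below -/
import Mathlib

section
/- Let k ≥ 2 and n = 2k. For any three vertices u, v, w of the Cartesian product graph C_n □ C_n, the sum of pairwise distances satisfies d(u,v) + d(v,w) + d(u,w) ≤ 2·diam(C_n □ C_n) = 4k. -/
open SimpleGraph
open Fin.CommRing

/-- `c` is a radio labeling of `G`: labels are positive integers and for every two
distinct vertices `u, v` we have `d(u,v) + |c(u) - c(v)| ≥ 1 + diam(G)`. -/
def IsRadioLabeling {V : Type*} (G : SimpleGraph V) (c : V → ℕ) : Prop :=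
  (∀ v, 1 ≤ c v) ∧
    ∀ u v : V, u ≠ v → G.diam + 1 ≤ G.dist u v + Nat.dist (c u) (c v)

/-- The span of a labeling: the maximum label used. -/
def labelSpan {V : Type*} [Fintype V] (c : V → ℕ) : ℕ := Finset.univ.sup c

/-- The radio number of `G`: the minimum span over all radio labelings. -/
noncomputable def radioNumber {V : Type*} [Fintype V] (G : SimpleGraph V) : ℕ :=
  sInf {s | ∃ c : V → ℕ, IsRadioLabeling G c ∧ labelSpan c = s}

variable {n : ℕ}

lemma fin_min_neg (x : Fin n) : min x.val (-x).val = min x.val (n - x.val) := by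
  have hx := x.isLt
  rw [Fin.neg_def]
  simp only
  rcases Nat.eq_zero_or_pos x.val with h | h
  · simp [h, Nat.sub_zero, Nat.mod_self]
  · rw [Nat.mod_eq_of_lt (by omega)]

lemma fin_val_add_one [NeZero n] (hn : 2 ≤ n) (x : Fin n) :
    (x + 1).val = x.val + 1 ∨ (x.val + 1 = n ∧ (x + 1).val = 0) := by
  have hx := x.isLt
  have h1 : (1 : Fin n).val = 1 := by
    rw [Fin.val_one']; exact Nat.mod_eq_of_lt hn
  rw [Fin.add_def, h1]
  rcases Nat.lt_or_ge (x.val + 1) n with h | h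
  · left; exact Nat.mod_eq_of_lt h
  · right; have : x.val + 1 = n := by omega
    have h2 : x.val + 1 = n := by omega
    refine ⟨h2, ?_⟩
    simp [h2, Nat.mod_self]

/-- the "cycle norm" function -/
def gmin (n : ℕ) (x : Fin n) : ℕ := min x.val (n - x.val)

lemma gmin_eq (x : Fin n) : gmin n x = min x.val (-x).val := (fin_min_neg x).symm

lemma gmin_step [NeZero n] (hn : 2 ≤ n) (x : Fin n) :
    gmin n x ≤ gmin n (x + 1) + 1 ∧ gmin n (x + 1) ≤ gmin n x + 1 := by
  have hx := x.isLt
  rcases fin_val_add_one hn x with h | ⟨h1, h2⟩ <;>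
    simp only [gmin] <;> omega

lemma cycle_connected (hn : 2 ≤ n) : (cycleGraph n).Connected := by
  obtain ⟨m, rfl⟩ := Nat.exists_eq_succ_of_ne_zero (by omega : n ≠ 0)
  exact cycleGraph_connected

lemma cycle_walk_le (hn : 2 ≤ n) {u v : Fin n} (w : (cycleGraph n).Walk u v) :
    gmin n (v - u) ≤ w.length := by
  haveI : NeZero n := ⟨by omega⟩
  induction w with
  | nil => simp [gmin]
  | @cons a b c h w ih =>
    rw [Walk.length_cons]
    have h1 : (1 : Fin n).val = 1 := by rw [Fin.val_one']; exact Nat.mod_eq_of_lt hn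
    rw [cycleGraph_adj'] at h
    rcases h with h | h
    · have hab : a - b = 1 := by apply Fin.ext; rw [h, h1]
      have hvb : c - b = (c - a) + 1 := by rw [← hab]; ring
      have := (gmin_step hn (c - a)).1
      rw [← hvb] at this
      omega
    · have hba : b - a = 1 := by apply Fin.ext; rw [h, h1]
      have hvu : c - a = (c - b) + 1 := by rw [← hba]; ring
      have := (gmin_step hn (c - b)).2
      rw [← hvu] at this
      omega

lemma cycle_dist_add [NeZero n] (hn : 2 ≤ n) (u : Fin n) (m : ℕ) :
    (cycleGraph n).dist u (u + (m : Fin n)) ≤ m := by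
  have hconn := cycle_connected hn
  induction m with
  | zero => simp
  | succ m ih =>
    have hadj : (cycleGraph n).Adj (u + (m : Fin n)) (u + ((m + 1 : ℕ) : Fin n)) := by
      rw [cycleGraph_adj']
      right
      have : (u + ((m + 1 : ℕ) : Fin n)) - (u + (m : Fin n)) = 1 := by push_cast; ring
      rw [this, Fin.val_one']
      exact Nat.mod_eq_of_lt hn
    have h1 : (cycleGraph n).dist (u + (m : Fin n)) (u + ((m + 1 : ℕ) : Fin n)) ≤ 1 := by
      have := SimpleGraph.dist_le hadj.toWalk
      simpa using this
    calc (cycleGraph n).dist u (u + ((m + 1 : ℕ) : Fin n))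
        ≤ (cycleGraph n).dist u (u + (m : Fin n)) +
          (cycleGraph n).dist (u + (m : Fin n)) (u + ((m + 1 : ℕ) : Fin n)) :=
          hconn.dist_triangle
      _ ≤ m + 1 := by omega

lemma cycle_dist (hn : 2 ≤ n) (u v : Fin n) :
    (cycleGraph n).dist u v = gmin n (v - u) := by
  haveI : NeZero n := ⟨by omega⟩
  apply le_antisymm
  · rw [gmin_eq, neg_sub]
    apply le_min
    · have := cycle_dist_add hn u (v - u).val
      rwa [Fin.cast_val_eq_self, show u + (v - u) = v by ring] at this
    · rw [SimpleGraph.dist_comm]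
      have := cycle_dist_add hn v (u - v).val
      rwa [Fin.cast_val_eq_self, show v + (u - v) = u by ring] at this
  · obtain ⟨p, hp⟩ := (cycle_connected hn).exists_walk_length_eq_dist u v
    rw [← hp]
    exact cycle_walk_le hn p

section boxprod
variable {α β : Type*} {G : SimpleGraph α} {H : SimpleGraph β}

lemma boxProd_walk_ge (hG : G.Connected) (hH : H.Connected) {x y : α × β}
    (w : (G □ H).Walk x y) :
    G.dist x.1 y.1 + H.dist x.2 y.2 ≤ w.length := by
  induction w with
  | nil => simp
  | @cons a b c h w ih =>
    rw [Walk.length_cons]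
    rcases h with ⟨h, he⟩ | ⟨h, he⟩
    · have h1 : G.dist a.1 c.1 ≤ G.dist b.1 c.1 + 1 := by
        have := hG.dist_triangle (u := a.1) (v := b.1) (w := c.1)
        have h2 : G.dist a.1 b.1 ≤ 1 := by simpa using SimpleGraph.dist_le h.toWalk
        omega
      rw [he]
      omega
    · have h1 : H.dist a.2 c.2 ≤ H.dist b.2 c.2 + 1 := by
        have := hH.dist_triangle (u := a.2) (v := b.2) (w := c.2)
        have h2 : H.dist a.2 b.2 ≤ 1 := by simpa using SimpleGraph.dist_le h.toWalk
        omega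
      rw [he]
      omega

lemma boxProd_dist (hG : G.Connected) (hH : H.Connected) (x y : α × β) :
    (G □ H).dist x y = G.dist x.1 y.1 + H.dist x.2 y.2 := by
  obtain ⟨x1, x2⟩ := x
  obtain ⟨y1, y2⟩ := y
  apply le_antisymm
  · obtain ⟨w1, hw1⟩ := hG.exists_walk_length_eq_dist x1 y1
    obtain ⟨w2, hw2⟩ := hH.exists_walk_length_eq_dist x2 y2
    have := SimpleGraph.dist_le ((w1.boxProdLeft H x2).append (w2.boxProdRight G y1))
    have e1 : (w1.boxProdLeft H x2).length = w1.length := Walk.length_map _ _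
    have e2 : (w2.boxProdRight G y1).length = w2.length := Walk.length_map _ _
    rwa [Walk.length_append, e1, e2, hw1, hw2] at this
  · obtain ⟨p, hp⟩ := (hG.boxProd hH).exists_walk_length_eq_dist (x1, x2) (y1, y2)
    rw [← hp]
    exact boxProd_walk_ge hG hH p

end boxprod

lemma cycle_three (hn2 : 2 ≤ n) (a b c : Fin n) :
    gmin n (b - a) + gmin n (c - b) + gmin n (c - a) ≤ n := by
  haveI : NeZero n := ⟨by omega⟩
  have hz : c - a = (b - a) + (c - b) := by ring
  rw [hz]
  set x := b - a with hx
  set y := c - b with hy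
  have hxv := x.isLt
  have hyv := y.isLt
  have hsum : (x + y).val = (x.val + y.val) % n := by rw [Fin.add_def]
  have hcase : (x + y).val = x.val + y.val ∨
      (x + y).val = x.val + y.val - n ∧ n ≤ x.val + y.val := by
    rcases Nat.lt_or_ge (x.val + y.val) n with h | h
    · left; rw [hsum, Nat.mod_eq_of_lt h]
    · right
      refine ⟨?_, h⟩
      rw [hsum]
      have h2 : x.val + y.val - n < n := by omega
      have : (x.val + y.val) % n = (x.val + y.val - n) % n := by
        conv_lhs => rw [show x.val + y.val = (x.val + y.val - n) + n by omega]
        rw [Nat.add_mod_right]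
      rw [this, Nat.mod_eq_of_lt h2]
  simp only [gmin]
  omega

/-- for `n = 2k`, `k ≥ 2`, any three vertices of `C_n □ C_n` have pairwise
distance sum at most `2 · diam(C_n □ C_n) = 4k`. -/
theorem sum_dist_le_two_diam_even (n k : ℕ) (hk : 2 ≤ k) (hn : n = 2 * k)
    (u v w : Fin n × Fin n) :
    (cycleGraph n □ cycleGraph n).dist u v + (cycleGraph n □ cycleGraph n).dist v w +
        (cycleGraph n □ cycleGraph n).dist u w ≤ 2 * (cycleGraph n □ cycleGraph n).diam ∧
      2 * (cycleGraph n □ cycleGraph n).diam = 4 * k := by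
  have hn2 : 2 ≤ n := by omega
  haveI : NeZero n := ⟨by omega⟩
  have hconn := cycle_connected (n := n) hn2
  have hd : ∀ a b : Fin n × Fin n, (cycleGraph n □ cycleGraph n).dist a b
      = gmin n (b.1 - a.1) + gmin n (b.2 - a.2) := by
    intro a b
    rw [boxProd_dist hconn hconn, cycle_dist hn2, cycle_dist hn2]
  have hgle : ∀ x : Fin n, gmin n x ≤ k := by
    intro x; have := x.isLt; simp only [gmin]; omega
  have hdle : ∀ a b : Fin n × Fin n, (cycleGraph n □ cycleGraph n).dist a b ≤ n := by
    intro a b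
    rw [hd]
    have := hgle (b.1 - a.1); have := hgle (b.2 - a.2); omega
  have hediam : (cycleGraph n □ cycleGraph n).ediam ≤ (n : ℕ∞) := by
    apply ediam_le_of_edist_le
    intro a b
    obtain ⟨p, hp⟩ := (hconn.boxProd hconn).exists_walk_length_eq_dist a b
    calc (cycleGraph n □ cycleGraph n).edist a b ≤ (p.length : ℕ∞) := edist_le p
      _ ≤ (n : ℕ∞) := by rw [hp]; exact_mod_cast hdle a b
  have htop : (cycleGraph n □ cycleGraph n).ediam ≠ ⊤ :=
    ne_top_of_le_ne_top (ENat.coe_ne_top n) hediam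
  have hdiam_le : (cycleGraph n □ cycleGraph n).diam ≤ n := by
    have := ENat.toNat_le_toNat hediam (ENat.coe_ne_top n)
    simpa [SimpleGraph.diam] using this
  have hdiam_ge : n ≤ (cycleGraph n □ cycleGraph n).diam := by
    have hkk : k < n := by omega
    have hle := dist_le_diam htop (u := ((0, 0) : Fin n × Fin n))
      (v := ((⟨k, hkk⟩, ⟨k, hkk⟩) : Fin n × Fin n))
    rw [hd] at hle
    have hsub : (⟨k, hkk⟩ - 0 : Fin n) = ⟨k, hkk⟩ := by rw [sub_zero]
    simp only [hsub] at hle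
    have : gmin n (⟨k, hkk⟩ : Fin n) = k := by simp only [gmin]; omega
    omega
  have hdiam : (cycleGraph n □ cycleGraph n).diam = n := le_antisymm hdiam_le hdiam_ge
  constructor
  · rw [hd, hd, hd, hdiam]
    have h1 := cycle_three hn2 u.1 v.1 w.1
    have h2 := cycle_three hn2 u.2 v.2 w.2
    omega
  · rw [hdiam]; omega
end

section
/- Let k ≥ 2 and n = 2k. If c is a radio labeling of C_n □ C_n, then for any three vertices u, v, w of C_n □ C_n with c(u) < c(v) < c(w), one has c(w) − c(u) ≥ k + 2. -/
open SimpleGraph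
open Fin.CommRing

section Cycle
variable {n : ℕ}

lemma fin_sub_val (hn : 0 < n) (a b : Fin n) :
    (a - b).val = if b.val ≤ a.val then a.val - b.val else a.val + n - b.val := by
  rw [Fin.sub_def]
  simp only []
  split_ifs with h
  · have h2 : n - b.val + a.val = (a.val - b.val) + n := by omega
    rw [h2, Nat.add_mod_right, Nat.mod_eq_of_lt (by omega)]
  · rw [Nat.mod_eq_of_lt (by omega)]
    omega

lemma fin_sub_add (hn : 0 < n) {a b : Fin n} (h : a ≠ b) :
    (a - b).val + (b - a).val = n := by
  have hne : a.val ≠ b.val := fun hh => h (Fin.ext hh)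
  rw [fin_sub_val hn, fin_sub_val hn]
  split_ifs <;> omega

lemma cycle_adj_dist {a b : Fin n} (h : (cycleGraph n).Adj a b) :
    (cycleGraph n).dist a b ≤ 1 := by
  simpa using dist_le (Walk.cons h Walk.nil)

lemma cycle_dist_le (hn : 2 ≤ n) (u v : Fin n) :
    (cycleGraph n).dist u v ≤ (v - u).val := by
  haveI : NeZero n := ⟨by omega⟩
  have hc := cycle_connected hn
  have key : ∀ m : ℕ, ∀ u : Fin n, (cycleGraph n).dist u (u + (m : Fin n)) ≤ m := by
    intro m
    induction m with
    | zero => intro u; simp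
    | succ m ih =>
      intro u
      have hadj : (cycleGraph n).Adj (u + (m : Fin n)) (u + ((m + 1 : ℕ) : Fin n)) := by
        rw [cycleGraph_adj']
        right
        have h1 : (u + ((m + 1 : ℕ) : Fin n)) - (u + (m : Fin n)) = 1 := by
          push_cast
          ring
        rw [h1, Fin.val_one' n, Nat.mod_eq_of_lt (by omega)]
      calc (cycleGraph n).dist u (u + ((m + 1 : ℕ) : Fin n))
          ≤ (cycleGraph n).dist u (u + (m : Fin n))
            + (cycleGraph n).dist (u + (m : Fin n)) (u + ((m + 1 : ℕ) : Fin n)) :=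
        hc.dist_triangle
        _ ≤ m + 1 := Nat.add_le_add (ih u) (cycle_adj_dist hadj)
  have h2 := key (v - u).val u
  rwa [Fin.cast_val_eq_self, add_sub_cancel] at h2

lemma cycle_dist_lower (hn : 2 ≤ n) (u v : Fin n) :
    min (v - u).val (u - v).val ≤ (cycleGraph n).dist u v := by
  haveI : NeZero n := ⟨by omega⟩
  have hpos : 0 < n := by omega
  have valz : ∀ x : Fin n, x.val = 0 → x = 0 := fun x h => Fin.ext (by simp [h])
  obtain ⟨p, hp⟩ := (cycle_connected hn).exists_walk_length_eq_dist u v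
  rw [← hp]; clear hp
  induction p with
  | nil => simp [sub_self]
  | @cons u b v h q ih =>
    simp only [Walk.length_cons]
    rcases eq_or_ne u v with rfl | huv
    · simp
    rcases eq_or_ne b v with rfl | hbv
    · -- adj u v, so one of the two arcs is 1
      rw [cycleGraph_adj'] at h
      rcases h with h | h <;> omega
    · have hrel := cycleGraph_adj'.mp h
      have sum1 : (v - u).val + (u - v).val = n := fin_sub_add hpos (Ne.symm huv)
      have sum2 : (v - b).val + (b - v).val = n := fin_sub_add hpos (Ne.symm hbv)
      rcases hrel with h1 | h1
      · -- (u - b).val = 1 : u = b + 1, so u - v = (u - b) + (b - v)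
        have key : (u - v) = (u - b) + (b - v) := by ring
        have hval : (u - v).val = (1 + (b - v).val) % n := by
          rw [key, Fin.add_def, h1]
        rcases Nat.lt_or_ge (1 + (b - v).val) n with hlt | hge
        · rw [Nat.mod_eq_of_lt hlt] at hval
          omega
        · have hb : (b - v).val < n := (b - v).isLt
          have heq : 1 + (b - v).val = n := by omega
          rw [heq, Nat.mod_self] at hval
          exact absurd (sub_eq_zero.mp (valz _ hval)) huv
      · -- (b - u).val = 1 : v - u = (v - b) + (b - u)
        have key : (v - u) = (v - b) + (b - u) := by ring
        have hval : (v - u).val = ((v - b).val + 1) % n := by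
          rw [key, Fin.add_def, h1]
        rcases Nat.lt_or_ge ((v - b).val + 1) n with hlt | hge
        · rw [Nat.mod_eq_of_lt hlt] at hval
          omega
        · have hb : (v - b).val < n := (v - b).isLt
          have heq : (v - b).val + 1 = n := by omega
          rw [heq, Nat.mod_self] at hval
          exact absurd (sub_eq_zero.mp (valz _ hval)) huv.symm

lemma cycle_three_s1 (hn : 2 ≤ n) (u v w : Fin n) :
    (cycleGraph n).dist u v + (cycleGraph n).dist v w + (cycleGraph n).dist u w ≤ n := by
  haveI : NeZero n := ⟨by omega⟩
  have hpos : 0 < n := by omega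
  have dle : ∀ a b : Fin n, (cycleGraph n).dist a b ≤ (b - a).val := cycle_dist_le hn
  have dle' : ∀ a b : Fin n, (cycleGraph n).dist a b ≤ (a - b).val := by
    intro a b; rw [SimpleGraph.dist_comm]; exact dle b a
  have twice : ∀ a b : Fin n, 2 * (cycleGraph n).dist a b ≤ n := by
    intro a b
    rcases eq_or_ne a b with rfl | hab
    · simp only [SimpleGraph.dist_self]; omega
    · have := fin_sub_add hpos hab
      have h1 := dle a b; have h2 := dle' a b
      omega
  rcases eq_or_ne u v with rfl | huv
  · have := twice u w; simp only [SimpleGraph.dist_self]; omega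
  rcases eq_or_ne v w with rfl | hvw
  · have := twice u v; simp only [SimpleGraph.dist_self]; omega
  rcases eq_or_ne u w with rfl | huw
  · have h := twice u v
    have hcomm : (cycleGraph n).dist v u = (cycleGraph n).dist u v := SimpleGraph.dist_comm
    simp only [SimpleGraph.dist_self]; omega
  · set a := (v - u).val
    set b := (w - v).val
    set cc := (u - w).val
    have hzero : ((v - u) + (w - v) + (u - w)) = (0 : Fin n) := by ring
    have hmod : (a + b + cc) % n = 0 := by
      have e1 : ((v - u) + (w - v) + (u - w)).val = (a + b + cc) % n := by
        simp only [Fin.add_def]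
        exact Nat.mod_add_mod _ _ _
      rw [← e1, hzero, Fin.val_zero]
    have s1 : a + (u - v).val = n := fin_sub_add hpos (Ne.symm huv)
    have s2 : b + (v - w).val = n := fin_sub_add hpos (Ne.symm hvw)
    have s3 : cc + (w - u).val = n := fin_sub_add hpos huw
    obtain ⟨q, hq⟩ := Nat.dvd_of_mod_eq_zero hmod
    have ha : 0 < a := by
      rcases Nat.eq_zero_or_pos a with h0 | h
      · exact absurd (sub_eq_zero.mp (Fin.ext (by rw [Fin.val_zero]; exact h0 : (v - u).val = (0 : Fin n).val))) (Ne.symm huv)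
      · exact h
    have hb : 0 < b := by
      rcases Nat.eq_zero_or_pos b with h0 | h
      · exact absurd (sub_eq_zero.mp (Fin.ext (by rw [Fin.val_zero]; exact h0 : (w - v).val = (0 : Fin n).val))) (Ne.symm hvw)
      · exact h
    have hcc : 0 < cc := by
      rcases Nat.eq_zero_or_pos cc with h0 | h
      · exact absurd (sub_eq_zero.mp (Fin.ext
          (by rw [Fin.val_zero]; exact h0 : (u - w).val = (0 : Fin n).val))) huw
      · exact h
    have hlt : a < n := (v - u).isLt
    have hlt2 : b < n := (w - v).isLt
    have hlt3 : cc < n := (u - w).isLt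
    have hq3 : q = 1 ∨ q = 2 := by
      rcases q with _ | _ | _ | q
      · omega
      · omega
      · omega
      · exfalso; nlinarith
    have d1 := dle u v
    have d2 := dle v w
    have d3 := dle' u w
    have d1' := dle' u v
    have d2' := dle' v w
    have d3' := dle u w
    rcases hq3 with rfl | rfl <;> omega

end Cycle

section Box
variable {α β : Type*} {G : SimpleGraph α} {H : SimpleGraph β}

lemma adj_dist_le_one {a b : α} (h : G.Adj a b) : G.dist a b ≤ 1 := by
  simpa using dist_le (Walk.cons h Walk.nil)

lemma boxProd_dist_le (hG : G.Connected) (hH : H.Connected) (x y : α × β) :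
    (G □ H).dist x y ≤ G.dist x.1 y.1 + H.dist x.2 y.2 := by
  obtain ⟨p, hp⟩ := hG.exists_walk_length_eq_dist x.1 y.1
  obtain ⟨q, hq⟩ := hH.exists_walk_length_eq_dist x.2 y.2
  have h := dist_le ((p.boxProdLeft H x.2).append (q.boxProdRight G y.1))
  rw [Walk.length_append] at h
  have l1 : (p.boxProdLeft H x.2).length = p.length := Walk.length_map _ _
  have l2 : (q.boxProdRight G y.1).length = q.length := Walk.length_map _ _
  rw [l1, l2, hp, hq] at h
  exact h

lemma boxProd_dist_lower (hG : G.Connected) (hH : H.Connected) (x y : α × β) :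
    G.dist x.1 y.1 + H.dist x.2 y.2 ≤ (G □ H).dist x y := by
  obtain ⟨p, hp⟩ := (hG.boxProd hH).exists_walk_length_eq_dist x y
  rw [← hp]; clear hp
  induction p with
  | nil => simp
  | @cons x b y h q ih =>
    simp only [Walk.length_cons]
    rcases h with ⟨hA, hE⟩ | ⟨hA, hE⟩
    · have t1 : G.dist x.1 y.1 ≤ G.dist x.1 b.1 + G.dist b.1 y.1 := hG.dist_triangle
      have t2 : G.dist x.1 b.1 ≤ 1 := adj_dist_le_one hA
      have t3 : H.dist x.2 y.2 = H.dist b.2 y.2 := by rw [hE]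
      omega
    · have t1 : H.dist x.2 y.2 ≤ H.dist x.2 b.2 + H.dist b.2 y.2 := hH.dist_triangle
      have t2 : H.dist x.2 b.2 ≤ 1 := adj_dist_le_one hA
      have t3 : G.dist x.1 y.1 = G.dist b.1 y.1 := by rw [hE]
      omega

end Box

lemma prod_diam_ge (k : ℕ) (hk : 2 ≤ k) :
    2 * k ≤ (cycleGraph (2 * k) □ cycleGraph (2 * k)).diam := by
  set n := 2 * k with hn
  haveI : NeZero n := ⟨by omega⟩
  have hn2 : 2 ≤ n := by omega
  have hc := cycle_connected (n := n) hn2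
  have hconn := hc.boxProd hc
  -- the two far vertices
  set y : Fin n := (k : Fin n) with hy
  have hyval : y.val = k := by
    rw [hy, Fin.val_natCast, Nat.mod_eq_of_lt (by omega)]
  have h1 : k ≤ (cycleGraph n).dist 0 y := by
    have hlow := cycle_dist_lower hn2 0 y
    have e1 : (y - 0).val = k := by rw [sub_zero, hyval]
    have e2 : (0 - y).val = k := by
      rw [fin_sub_val (by omega)]
      simp only [Fin.val_zero, hyval]
      have : ¬ (k ≤ 0) := by omega
      rw [if_neg this]
      omega
    rw [e1, e2, min_self] at hlow
    exact hlow
  have h2 : 2 * k ≤ (cycleGraph n □ cycleGraph n).dist (0, 0) (y, y) := by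
    have := boxProd_dist_lower hc hc (0, 0) (y, y)
    simp only at this
    omega
  have hne : (cycleGraph n □ cycleGraph n).ediam ≠ ⊤ := by
    obtain ⟨a, b, hab⟩ :=
      exists_edist_eq_ediam_of_finite (G := cycleGraph n □ cycleGraph n)
    rw [← hab]
    exact edist_ne_top_iff_reachable.mpr (hconn a b)
  exact le_trans h2 (dist_le_diam hne)

/-- for `n = 2k`, `k ≥ 2`, any radio labeling `c` of `C_n □ C_n` and vertices
`u, v, w` with `c u < c v < c w` satisfy `c w - c u ≥ k + 2`. -/
theorem gap_every_other_label_even (n k : ℕ) (hk : 2 ≤ k) (hn : n = 2 * k)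
    (c : Fin n × Fin n → ℕ) (hc : IsRadioLabeling (cycleGraph n □ cycleGraph n) c)
    (u v w : Fin n × Fin n) (huv : c u < c v) (hvw : c v < c w) :
    k + 2 ≤ c w - c u := by
  subst hn
  have hn2 : 2 ≤ 2 * k := by omega
  have hcyc := cycle_connected (n := 2 * k) hn2
  have hne_uv : u ≠ v := fun h => by rw [h] at huv; exact lt_irrefl _ huv
  have hne_vw : v ≠ w := fun h => by rw [h] at hvw; exact lt_irrefl _ hvw
  have hne_uw : u ≠ w := fun h => by rw [h] at huv; omega
  have h1 := hc.2 u v hne_uv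
  have h2 := hc.2 v w hne_vw
  have h3 := hc.2 u w hne_uw
  have hdiam := prod_diam_ge k hk
  -- sum of the three distances is at most 4k
  have hsum : (cycleGraph (2 * k) □ cycleGraph (2 * k)).dist u v
      + (cycleGraph (2 * k) □ cycleGraph (2 * k)).dist v w
      + (cycleGraph (2 * k) □ cycleGraph (2 * k)).dist u w ≤ 2 * (2 * k) := by
    have b1 := boxProd_dist_le hcyc hcyc u v
    have b2 := boxProd_dist_le hcyc hcyc v w
    have b3 := boxProd_dist_le hcyc hcyc u w
    have c1 := cycle_three_s1 hn2 u.1 v.1 w.1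
    have c2 := cycle_three_s1 hn2 u.2 v.2 w.2
    omega
  simp only [Nat.dist] at h1 h2 h3
  omega
end

section
/- Let k ≥ 2 and n = 2k. Define p : {0,1,...,n²−1} → {0,...,n−1} × {0,...,n−1} (components taken mod n) by p(i) = (r, kr+s) if i ≡ 0 (mod 4), p(i) = (r+k, kr+s+k) if i ≡ 1 (mod 4), p(i) = (r, kr+s+k) if i ≡ 2 (mod 4), and p(i) = (r+k, kr+s) if i ≡ 3 (mod 4), where r = ⌊i/(2n)⌋ and s = ⌊i/4⌋ mod k. Then p is a bijection. -/
open SimpleGraph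

/-- The position function for even `n = 2k` (Theorem 3.3): with `r = ⌊i/(2n)⌋`,
`s = ⌊i/4⌋ mod k`, and components taken mod `n`,
`p(i) = (r, kr+s), (r+k, kr+s+k), (r, kr+s+k), (r+k, kr+s)` according as
`i ≡ 0, 1, 2, 3 (mod 4)`. -/
def posEven (n k : ℕ) (i : ℕ) : ZMod n × ZMod n :=
  if i % 4 = 0 then ((i / (2 * n) : ℕ), (k * (i / (2 * n)) + i / 4 % k : ℕ))
  else if i % 4 = 1 then
    ((i / (2 * n) + k : ℕ), (k * (i / (2 * n)) + i / 4 % k + k : ℕ))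
  else if i % 4 = 2 then
    ((i / (2 * n) : ℕ), (k * (i / (2 * n)) + i / 4 % k + k : ℕ))
  else ((i / (2 * n) + k : ℕ), (k * (i / (2 * n)) + i / 4 % k : ℕ))

/-- Explicit decoder. -/
def decodeEven (k : ℕ) (p : ZMod (2 * k) × ZMod (2 * k)) : ℕ :=
  if p.1.val < k then
    4 * k * p.1.val + 4 * (p.2.val % k) + (if p.2.val / k = p.1.val % 2 then 0 else 2)
  else
    4 * k * (p.1.val - k) + 4 * (p.2.val % k) +
      (if p.2.val / k = (p.1.val - k + 1) % 2 then 1 else 3)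

lemma mod_div_aux (k s t : ℕ) (hs : s < k) (ht : t ≤ 1) :
    (k * t + s) % k = s ∧ (k * t + s) / k = t := by
  have hk : 0 < k := by omega
  interval_cases t
  · simp [Nat.mod_eq_of_lt hs, Nat.div_eq_of_lt hs]
  · constructor
    · simpa [Nat.add_mod_left] using Nat.mod_eq_of_lt hs
    · rw [mul_one, add_comm, Nat.add_div_right _ hk, Nat.div_eq_of_lt hs]

lemma big_mod (k r s : ℕ) (hs : s < k) :
    (k * r + s) % (2 * k) = k * (r % 2) + s := by
  have h1 : k * r + s = 2 * k * (r / 2) + (k * (r % 2) + s) := by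
    nlinarith [Nat.div_add_mod r 2]
  rw [h1, Nat.mul_add_mod]
  have : k * (r % 2) + s < 2 * k := by
    have : r % 2 ≤ 1 := by omega
    nlinarith
  exact Nat.mod_eq_of_lt this

lemma decode_posEven (k : ℕ) (hk : 2 ≤ k) (r s q : ℕ) (hr : r < k) (hs : s < k) (hq : q < 4) :
    decodeEven k (posEven (2 * k) k (4 * k * r + 4 * s + q)) = 4 * k * r + 4 * s + q := by
  haveI : NeZero (2 * k) := ⟨by omega⟩
  set i := 4 * k * r + 4 * s + q with hi
  have h4 : i % 4 = q := by
    have : i = 4 * (k * r + s) + q := by ring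
    omega
  have hdiv : i / (2 * (2 * k)) = r := by
    have h1 : i = 2 * (2 * k) * r + (4 * s + q) := by ring
    rw [h1, Nat.mul_add_div (by omega)]
    have : (4 * s + q) / (2 * (2 * k)) = 0 := Nat.div_eq_of_lt (by omega)
    omega
  have hdiv4 : i / 4 % k = s := by
    have h1 : i = 4 * (k * r + s) + q := by ring
    rw [h1, Nat.mul_add_div (by norm_num), Nat.div_eq_of_lt hq, Nat.add_zero,
      Nat.mul_add_mod, Nat.mod_eq_of_lt hs]
  have hvr : ((r : ℕ) : ZMod (2 * k)).val = r := by
    rw [ZMod.val_natCast, Nat.mod_eq_of_lt (by omega)]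
  have hvrk : ((r + k : ℕ) : ZMod (2 * k)).val = r + k := by
    rw [ZMod.val_natCast, Nat.mod_eq_of_lt (by omega)]
  have hw0 : ((k * r + s : ℕ) : ZMod (2 * k)).val = k * (r % 2) + s := by
    rw [ZMod.val_natCast, big_mod k r s hs]
  have hw1 : ((k * r + s + k : ℕ) : ZMod (2 * k)).val = k * ((r + 1) % 2) + s := by
    have h : k * r + s + k = k * (r + 1) + s := by ring
    rw [h, ZMod.val_natCast, big_mod k (r + 1) s hs]
  have hm0 := mod_div_aux k s (r % 2) hs (by omega)
  have hm1 := mod_div_aux k s ((r + 1) % 2) hs (by omega)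
  interval_cases q
  · simp only [posEven, h4, decodeEven, hdiv, hdiv4, reduceIte]
    rw [hvr, hw0, hm0.1, hm0.2, if_pos hr, if_pos rfl]
    omega
  · simp only [posEven, h4, decodeEven, hdiv, hdiv4,
      show ((1:ℕ) = 0) ↔ False by simp, show ((1:ℕ) = 1) ↔ True by simp,
      if_false, if_true]
    rw [hvrk, hw1, hm1.1, hm1.2, if_neg (by omega), if_pos (by omega)]
    simp only [Nat.add_sub_cancel]
    omega
  · simp only [posEven, h4, decodeEven, hdiv, hdiv4,
      show ((2:ℕ) = 0) ↔ False by simp, show ((2:ℕ) = 1) ↔ False by simp,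
      show ((2:ℕ) = 2) ↔ True by simp, if_false, if_true]
    rw [hvr, hw1, hm1.1, hm1.2, if_pos hr, if_neg (by omega)]
    omega
  · simp only [posEven, h4, decodeEven, hdiv, hdiv4,
      show ((3:ℕ) = 0) ↔ False by simp, show ((3:ℕ) = 1) ↔ False by simp,
      show ((3:ℕ) = 2) ↔ False by simp, if_false]
    rw [hvrk, hw0, hm0.1, hm0.2, if_neg (by omega), if_neg (by omega)]
    simp only [Nat.add_sub_cancel]
    omega
/-- for `n = 2k`, `k ≥ 2`, the position function `p` is a bijection from
`{0, 1, …, n² - 1}` onto the `n²` pairs `(v, w)` with components mod `n`. -/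
theorem posEven_bijective (n k : ℕ) (hk : 2 ≤ k) (hn : n = 2 * k) :
    Function.Bijective (fun i : Fin (n ^ 2) => posEven n k i) := by
  subst hn
  haveI : NeZero (2 * k) := ⟨by omega⟩
  have hcard : Fintype.card (Fin ((2 * k) ^ 2)) =
      Fintype.card (ZMod (2 * k) × ZMod (2 * k)) := by
    simp [ZMod.card]
    ring
  rw [Fintype.bijective_iff_injective_and_card]
  refine ⟨?_, hcard⟩
  intro i j h
  simp only at h
  have key : ∀ m : Fin ((2 * k) ^ 2), decodeEven k (posEven (2 * k) k m) = (m : ℕ) := by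
    intro m
    have hm : (m : ℕ) < (2 * k) ^ 2 := m.isLt
    have hdm := Nat.div_add_mod (m : ℕ) (4 * k)
    have hlt : (m : ℕ) % (4 * k) < 4 * k := Nat.mod_lt _ (by omega)
    set r := (m : ℕ) / (4 * k) with hrdef
    set rem := (m : ℕ) % (4 * k) with hremdef
    have hr : r < k := by
      apply Nat.div_lt_of_lt_mul
      calc (m : ℕ) < (2 * k) ^ 2 := hm
        _ = 4 * k * k := by ring
    have hmeq : (m : ℕ) = 4 * k * r + 4 * (rem / 4) + rem % 4 := by omega
    have hd := decode_posEven k hk r (rem / 4) (rem % 4) hr (by omega) (by omega)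
    rw [hmeq, hd]
  have hij : (i : ℕ) = (j : ℕ) := by rw [← key i, ← key j, h]
  exact Fin.ext hij
end

section
/- Let k ≥ 1 be odd and n = 2k+1. Define p : {0,1,...,n²−1} → {0,...,n−1} × {0,...,n−1} (components taken mod n) by p(i) = (ik mod n, (⌊i/n⌋ + i·(k+1)/2) mod n). Then p is a bijection. -/
open SimpleGraph

/-- The position function for odd `n = 2k + 1` with `k` odd (Theorem 3.4, Case 1):
`p(i) = (ik, ⌊i/n⌋ + i·(k+1)/2)`, components taken mod `n`. -/
def posOdd (n k : ℕ) (i : ℕ) : ZMod n × ZMod n :=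
  ((i * k : ℕ), (i / n + i * ((k + 1) / 2) : ℕ))

/-- for `n = 2k + 1` with `k ≥ 1` odd, the position function `p` is a bijection
from `{0, 1, …, n² - 1}` onto the `n²` pairs `(v, w)` with components mod `n`. -/
theorem posOdd_bijective (n k : ℕ) (hk : 1 ≤ k) (hkodd : Odd k) (hn : n = 2 * k + 1) :
    Function.Bijective (fun i : Fin (n ^ 2) => posOdd n k i) := by
  have hn0 : 0 < n := by omega
  haveI : NeZero n := ⟨by omega⟩
  rw [Fintype.bijective_iff_injective_and_card]
  refine ⟨?_, by simp [ZMod.card]; ring⟩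
  intro i j h
  simp only [posOdd, Prod.mk.injEq] at h
  obtain ⟨h1, h2⟩ := h
  have hcop : Nat.Coprime k n := by
    rw [hn, show 2 * k + 1 = 1 + k * 2 by ring]
    exact (Nat.coprime_add_mul_left_right k 1 2).2 (Nat.coprime_one_right k)
  have hku : IsUnit (k : ZMod n) := (ZMod.isUnit_iff_coprime k n).2 hcop
  push_cast at h1 h2
  have hij : ((i : ℕ) : ZMod n) = ((j : ℕ) : ZMod n) := hku.mul_right_cancel h1
  have hdiv : (((i : ℕ) / n : ℕ) : ZMod n) = (((j : ℕ) / n : ℕ) : ZMod n) := by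
    have : ((i : ℕ) : ZMod n) * (((k + 1) / 2 : ℕ) : ZMod n)
        = ((j : ℕ) : ZMod n) * (((k + 1) / 2 : ℕ) : ZMod n) := by rw [hij]
    push_cast at h2 ⊢
    linear_combination h2 - this
  have hi2 : (i : ℕ) < n ^ 2 := i.isLt
  have hj2 : (j : ℕ) < n ^ 2 := j.isLt
  have hdivlt : (i : ℕ) / n < n := Nat.div_lt_of_lt_mul (by nlinarith [sq_nonneg n])
  have hdivlt' : (j : ℕ) / n < n := Nat.div_lt_of_lt_mul (by nlinarith)
  rw [ZMod.natCast_eq_natCast_iff'] at hij hdiv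
  rw [Nat.mod_eq_of_lt hdivlt, Nat.mod_eq_of_lt hdivlt'] at hdiv
  exact Fin.ext (by rw [← Nat.div_add_mod (i : ℕ) n, ← Nat.div_add_mod (j : ℕ) n, hdiv, hij])
end

section
/- Let k ≥ 1 be odd and n = 2k+1. Define p : {0,1,...,n²−1} → V(C_n □ C_n) by p(i) = (ik mod n, (⌊i/n⌋ + i·(k+1)/2) mod n), and define c(i) = 1 + i·(k+1)/2. Then for all 0 ≤ i < j ≤ n²−1, d(p(i), p(j)) + (c(j) − c(i)) ≥ 2k + 1; that is, the vertex labeling assigning label c(i) to vertex p(i) is a radio labeling of C_n □ C_n. -/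
open SimpleGraph

/-- The cycle graph on `ZMod n`: `u` and `v` are adjacent iff they differ by `1 (mod n)`. -/
def zmodCycle (n : ℕ) : SimpleGraph (ZMod n) := circulantGraph {1}

/-- The labeling for odd `n = 2k + 1` with `k` odd: `c(i) = 1 + i·(k+1)/2`. -/
def labelOdd (k : ℕ) (i : ℕ) : ℕ := 1 + i * ((k + 1) / 2)

lemma boxProd_walk_proj {α β : Type*} {G : SimpleGraph α} {H : SimpleGraph β} :
    ∀ {x y : α × β} (w : (G □ H).Walk x y),
      ∃ (w1 : G.Walk x.1 y.1) (w2 : H.Walk x.2 y.2), w1.length + w2.length = w.length := by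
  intro x y w
  induction w with
  | nil => exact ⟨Walk.nil, Walk.nil, rfl⟩
  | @cons u b y h w ih =>
    obtain ⟨w1, w2, hw⟩ := ih
    rcases boxProd_adj.mp h with ⟨h1, h2⟩ | ⟨h1, h2⟩
    · exact ⟨Walk.cons h1 w1, w2.copy h2.symm rfl, by simp; omega⟩
    · exact ⟨w1.copy h2.symm rfl, Walk.cons h1 w2, by simp; omega⟩

lemma boxProd_dist_ge {α β : Type*} {G : SimpleGraph α} {H : SimpleGraph β} {x y : α × β}
    (h : (G □ H).Reachable x y) :
    G.dist x.1 y.1 + H.dist x.2 y.2 ≤ (G □ H).dist x y := by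
  obtain ⟨w, hw⟩ := h.exists_walk_length_eq_dist
  obtain ⟨w1, w2, hl⟩ := boxProd_walk_proj w
  calc G.dist x.1 y.1 + H.dist x.2 y.2 ≤ w1.length + w2.length :=
        Nat.add_le_add (dist_le w1) (dist_le w2)
    _ = w.length := hl
    _ = _ := hw

lemma zmodCycle_walk {n : ℕ} : ∀ {u v : ZMod n} (w : (zmodCycle n).Walk u v),
    ∃ a b : ℕ, a + b = w.length ∧ v = u + (a : ZMod n) - (b : ZMod n) := by
  intro u v w
  induction w with
  | nil => exact ⟨0, 0, rfl, by simp⟩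
  | @cons u x v h w ih =>
    obtain ⟨a, b, hab, hxv⟩ := ih
    simp only [zmodCycle, circulantGraph_adj, Set.mem_singleton_iff] at h
    rcases h.2 with h' | h'
    · refine ⟨a, b + 1, by simp [← hab]; ring, ?_⟩
      have hx : x = u - 1 := by rw [← h']; ring
      rw [hxv, hx]; push_cast; ring
    · refine ⟨a + 1, b, by simp [← hab]; ring, ?_⟩
      have hx : x = u + 1 := by rw [← h']; ring
      rw [hxv, hx]; push_cast; ring

lemma zmodCycle_reachable {n : ℕ} (hn : 2 ≤ n) (u v : ZMod n) :
    (zmodCycle n).Reachable u v := by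
  haveI : NeZero n := ⟨by omega⟩
  haveI : Fact (1 < n) := ⟨hn⟩
  have key : ∀ (d : ℕ) (u : ZMod n), (zmodCycle n).Reachable u (u + d) := by
    intro d
    induction d with
    | zero => intro u; simpa using Reachable.refl u
    | succ d ih =>
      intro u
      have hadj : (zmodCycle n).Adj u (u + 1) := by
        simp only [zmodCycle, circulantGraph_adj, Set.mem_singleton_iff]
        refine ⟨?_, Or.inr (by ring)⟩
        intro hh
        have : (1 : ZMod n) = 0 := by
          have := hh.symm
          rwa [add_eq_left] at this
        exact one_ne_zero this
      have he : u + ((d + 1 : ℕ) : ZMod n) = (u + 1) + d := by push_cast; ring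
      exact (hadj.reachable).trans (he ▸ ih (u + 1))
  have h := key (v - u).val u
  rwa [ZMod.natCast_rightInverse (v - u), add_sub_cancel] at h

lemma zmodCycle_dist_ge {n : ℕ} [NeZero n] {u v : ZMod n}
    (h : (zmodCycle n).Reachable u v) :
    min (v - u).val (n - (v - u).val) ≤ (zmodCycle n).dist u v := by
  obtain ⟨w, hw⟩ := h.exists_walk_length_eq_dist
  obtain ⟨a, b, hab, hv⟩ := zmodCycle_walk w
  have hval : (((v - u).val : ℕ) : ZMod n) = v - u := ZMod.natCast_rightInverse (v - u)
  have h0 : ((((a : ℤ) - b) - ((v - u).val : ℤ) : ℤ) : ZMod n) = 0 := by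
    push_cast
    rw [hval, hv]; ring
  obtain ⟨c, hc⟩ := (ZMod.intCast_zmod_eq_zero_iff_dvd _ n).mp h0
  have hb : (n : ℤ) ≤ n * c ∨ (n : ℤ) * c = 0 ∨ (n : ℤ) * c ≤ -n := by
    rcases lt_trichotomy c 0 with h' | h' | h'
    · refine Or.inr (Or.inr ?_)
      have : (n : ℤ) * c ≤ n * (-1) := by
        apply mul_le_mul_of_nonneg_left (by omega) (by positivity)
      linarith
    · exact Or.inr (Or.inl (by rw [h', mul_zero]))
    · exact Or.inl (le_mul_of_one_le_right (by positivity) (by omega))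
  have hVlt : (v - u).val < n := ZMod.val_lt _
  rw [← hw, ← hab]
  omega

/-- for `n = 2k + 1` with `k ≥ 1` odd, assigning label `c(i)` to vertex `p(i)`
gives a radio labeling of `C_n □ C_n`: for all `0 ≤ i < j ≤ n² - 1`,
`d(p(i), p(j)) + (c(j) - c(i)) ≥ 2k + 1`. -/
theorem labelOdd_posOdd_radio (n k : ℕ) (hk : 1 ≤ k) (hkodd : Odd k) (hn : n = 2 * k + 1)
    (i j : Fin (n ^ 2)) (hij : (i : ℕ) < (j : ℕ)) :
    2 * k + 1 ≤
      (zmodCycle n □ zmodCycle n).dist (posOdd n k i) (posOdd n k j) +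
        (labelOdd k j - labelOdd k i) := by
  obtain ⟨t, ht⟩ := hkodd
  subst ht
  subst hn
  haveI : NeZero (2 * (2 * t + 1) + 1) := ⟨by omega⟩
  have hs : (2 * t + 1 + 1) / 2 = t + 1 := by omega
  have hmul : (j : ℕ) * (t + 1) = (i : ℕ) * (t + 1) + ((j : ℕ) - (i : ℕ)) * (t + 1) := by
    rw [← Nat.add_mul, Nat.add_sub_cancel' hij.le]
  have hgap : labelOdd (2 * t + 1) (j : ℕ) - labelOdd (2 * t + 1) (i : ℕ)
      = ((j : ℕ) - (i : ℕ)) * (t + 1) := by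
    simp only [labelOdd, hs]
    omega
  by_cases hm4 : 4 ≤ (j : ℕ) - (i : ℕ)
  · have h4 : 4 * (t + 1) ≤ ((j : ℕ) - (i : ℕ)) * (t + 1) := Nat.mul_le_mul_right _ hm4
    omega
  -- now 1 ≤ m ≤ 3
  · have hreach := zmodCycle_reachable (n := 2 * (2 * t + 1) + 1) (by omega)
    have hpre : ((zmodCycle (2 * (2 * t + 1) + 1)) □ (zmodCycle (2 * (2 * t + 1) + 1))).Preconnected :=
      Preconnected.boxProd (fun u v => hreach u v) (fun u v => hreach u v)
    have hD := boxProd_dist_ge (hpre (posOdd (2 * (2 * t + 1) + 1) (2 * t + 1) (i : ℕ))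
      (posOdd (2 * (2 * t + 1) + 1) (2 * t + 1) (j : ℕ)))
    have h1 := zmodCycle_dist_ge (hreach (posOdd (2 * (2 * t + 1) + 1) (2 * t + 1) (i : ℕ)).1
      (posOdd (2 * (2 * t + 1) + 1) (2 * t + 1) (j : ℕ)).1)
    have h2 := zmodCycle_dist_ge (hreach (posOdd (2 * (2 * t + 1) + 1) (2 * t + 1) (i : ℕ)).2
      (posOdd (2 * (2 * t + 1) + 1) (2 * t + 1) (j : ℕ)).2)
    have hdivle : (i : ℕ) / (2 * (2 * t + 1) + 1) ≤ (j : ℕ) / (2 * (2 * t + 1) + 1) :=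
      Nat.div_le_div_right hij.le
    have hle2 : (i : ℕ) / (2 * (2 * t + 1) + 1) + (i : ℕ) * (t + 1)
        ≤ (j : ℕ) / (2 * (2 * t + 1) + 1) + (j : ℕ) * (t + 1) := by omega
    have e1 : (posOdd (2 * (2 * t + 1) + 1) (2 * t + 1) (j : ℕ)).1
        - (posOdd (2 * (2 * t + 1) + 1) (2 * t + 1) (i : ℕ)).1
        = ((((j : ℕ) - (i : ℕ)) * (2 * t + 1) : ℕ) : ZMod (2 * (2 * t + 1) + 1)) := by
      simp only [posOdd]
      rw [Nat.sub_mul, Nat.cast_sub (Nat.mul_le_mul_right _ hij.le)]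
    have e2 : (posOdd (2 * (2 * t + 1) + 1) (2 * t + 1) (j : ℕ)).2
        - (posOdd (2 * (2 * t + 1) + 1) (2 * t + 1) (i : ℕ)).2
        = ((((j : ℕ) / (2 * (2 * t + 1) + 1) - (i : ℕ) / (2 * (2 * t + 1) + 1))
            + ((j : ℕ) - (i : ℕ)) * (t + 1) : ℕ) : ZMod (2 * (2 * t + 1) + 1)) := by
      simp only [posOdd, hs]
      rw [← Nat.cast_sub hle2]
      congr 1
      omega
    rw [e1, ZMod.val_natCast] at h1
    rw [e2, ZMod.val_natCast] at h2
    have hdiv1 : (j : ℕ) / (2 * (2 * t + 1) + 1) - (i : ℕ) / (2 * (2 * t + 1) + 1) ≤ 1 := by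
      have h3N : (j : ℕ) ≤ (i : ℕ) + (2 * (2 * t + 1) + 1) := by omega
      have hdd := Nat.div_le_div_right (c := 2 * (2 * t + 1) + 1) h3N
      rw [Nat.add_div_right _ (by omega)] at hdd
      omega
    have hm : (j : ℕ) - (i : ℕ) = 1 ∨ (j : ℕ) - (i : ℕ) = 2 ∨ (j : ℕ) - (i : ℕ) = 3 := by omega
    rcases hm with hm | hm | hm
    · rw [hm] at h1 h2 hgap
      have r1 : 1 * (2 * t + 1) % (2 * (2 * t + 1) + 1) = 2 * t + 1 := by
        rw [one_mul, Nat.mod_eq_of_lt (by omega)]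
      have r2 : ((j : ℕ) / (2 * (2 * t + 1) + 1) - (i : ℕ) / (2 * (2 * t + 1) + 1)
            + 1 * (t + 1)) % (2 * (2 * t + 1) + 1)
          = (j : ℕ) / (2 * (2 * t + 1) + 1) - (i : ℕ) / (2 * (2 * t + 1) + 1) + (t + 1) := by
        rw [one_mul, Nat.mod_eq_of_lt (by omega)]
      omega
    · rw [hm] at h1 h2 hgap
      have r1 : 2 * (2 * t + 1) % (2 * (2 * t + 1) + 1) = 2 * (2 * t + 1) :=
        Nat.mod_eq_of_lt (by omega)
      by_cases h0 : (j : ℕ) / (2 * (2 * t + 1) + 1) - (i : ℕ) / (2 * (2 * t + 1) + 1) = 1 ∧ t = 0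
      · obtain ⟨ha, hb⟩ := h0
        subst hb
        rw [ha] at h2
        norm_num at h1 h2 hD hgap ⊢
        omega
      · have r2 : ((j : ℕ) / (2 * (2 * t + 1) + 1) - (i : ℕ) / (2 * (2 * t + 1) + 1)
              + 2 * (t + 1)) % (2 * (2 * t + 1) + 1)
            = (j : ℕ) / (2 * (2 * t + 1) + 1) - (i : ℕ) / (2 * (2 * t + 1) + 1) + 2 * (t + 1) := by
          rw [Nat.mod_eq_of_lt (by omega)]
        omega
    · rw [hm] at h1 hgap
      clear h2
      have r1 : 3 * (2 * t + 1) % (2 * (2 * t + 1) + 1) = 2 * t := by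
        rw [show 3 * (2 * t + 1) = (2 * (2 * t + 1) + 1) + 2 * t from by ring,
          Nat.add_mod_left, Nat.mod_eq_of_lt (by omega)]
      omega
end

section
/- Let k ≥ 2 and n = 2k. Define p : {0,1,...,n²−1} → V(C_n □ C_n) (components mod n) by p(i) = (r, kr+s), (r+k, kr+s+k), (r, kr+s+k), (r+k, kr+s) according as i ≡ 0, 1, 2, 3 (mod 4), where r = ⌊i/(2n)⌋ and s = ⌊i/4⌋ mod k; and define c(i) = 1 + (i/2)(k+2) for i even and c(i) = 2 + ((i−1)/2)(k+2) for i odd. Then for all 0 ≤ i < j ≤ n²−1, d(p(i), p(j)) + (c(j) − c(i)) ≥ 2k + 1; that is, the vertex labeling assigning label c(i) to vertex p(i) is a radio labeling of C_n □ C_n. -/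
set_option linter.all false
set_option maxHeartbeats 3200000


open SimpleGraph

/-- The labeling for even `n = 2k`: `c(i) = 1 + (i/2)(k+2)` for `i` even and
`c(i) = 2 + ((i-1)/2)(k+2)` for `i` odd. -/
def labelEven (k : ℕ) (i : ℕ) : ℕ :=
  if i % 2 = 0 then 1 + i / 2 * (k + 2) else 2 + (i - 1) / 2 * (k + 2)

namespace RadioAux

/-- circular distance from `v` to `0` in `ZMod n` -/
def cyc (n : ℕ) (v : ZMod n) : ℕ := min v.val (-v).val

lemma cyc_neg (n : ℕ) (v : ZMod n) : cyc n (-v) = cyc n v := by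
  simp [cyc, neg_neg, min_comm]

lemma cyc_natCast (n : ℕ) [NeZero n] (m : ℕ) :
    cyc n (m : ZMod n) = min (m % n) (n - m % n) := by
  have hv : ((m : ZMod n)).val = m % n := ZMod.val_natCast n m
  rw [cyc, hv, ZMod.neg_val]
  split_ifs with h
  · have h0 : m % n = 0 := by rw [← hv]; simp [h]
    simp [h0]
  · rw [hv]

lemma cyc_succ (n : ℕ) [NeZero n] (h2 : 2 ≤ n) (v : ZMod n) :
    cyc n (v + 1) ≤ cyc n v + 1 := by
  have hv : ((v.val : ℕ) : ZMod n) = v := ZMod.natCast_rightInverse v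
  have h1 : v + 1 = ((v.val + 1 : ℕ) : ZMod n) := by push_cast [hv]; ring
  have ha : v.val < n := ZMod.val_lt v
  have h0 : cyc n v = min v.val (n - v.val) := by
    rw [cyc, ZMod.neg_val]
    split_ifs with h
    · simp [h]
    · rfl
  rw [h1, cyc_natCast, h0]
  rcases Nat.lt_or_ge (v.val + 1) n with h | h
  · rw [Nat.mod_eq_of_lt h]
    omega
  · have hn : v.val + 1 = n := by omega
    rw [hn, Nat.mod_self]
    omega

lemma cyc_pred (n : ℕ) [NeZero n] (h2 : 2 ≤ n) (v : ZMod n) :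
    cyc n (v - 1) ≤ cyc n v + 1 := by
  have h1 : v - 1 = -((-v) + 1) := by ring
  rw [h1, cyc_neg]
  calc cyc n (-v + 1) ≤ cyc n (-v) + 1 := cyc_succ n h2 _
    _ = cyc n v + 1 := by rw [cyc_neg]

lemma cyc_adj (n : ℕ) [NeZero n] (h2 : 2 ≤ n) (c : ZMod n) {x y : ZMod n}
    (h : (zmodCycle n).Adj x y) : cyc n (x - c) ≤ cyc n (y - c) + 1 := by
  rw [zmodCycle, circulantGraph_adj] at h
  obtain ⟨-, h | h⟩ := h <;> rw [Set.mem_singleton_iff] at h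
  · have hx : x - c = (y - c) + 1 := by rw [← h]; ring
    rw [hx]; exact cyc_succ n h2 _
  · have hx : x - c = (y - c) - 1 := by rw [← h]; ring
    rw [hx]; exact cyc_pred n h2 _

lemma le_length {V : Type*} {G : SimpleGraph V} (f : V → ℕ)
    (hf : ∀ u v, G.Adj u v → f u ≤ f v + 1) {u v : V} (w : G.Walk u v) :
    f u ≤ f v + w.length := by
  induction w with
  | nil => simp
  | cons h p ih =>
    have := hf _ _ h
    simp only [Walk.length_cons]
    omega

lemma le_dist {V : Type*} {G : SimpleGraph V} (hc : G.Connected) (f : V → ℕ)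
    (hf : ∀ u v, G.Adj u v → f u ≤ f v + 1) (u v : V) :
    f u ≤ f v + G.dist u v := by
  obtain ⟨w, hw⟩ := (hc u v).exists_walk_length_eq_dist
  rw [← hw]
  exact le_length f hf w

lemma zmodCycle_connected (n : ℕ) (h2 : 2 ≤ n) : (zmodCycle n).Connected := by
  haveI : NeZero n := ⟨by omega⟩
  haveI : Fact (1 < n) := ⟨h2⟩
  have hadj : ∀ m : ℕ, (zmodCycle n).Adj (m : ZMod n) ((m + 1 : ℕ) : ZMod n) := by
    intro m
    rw [zmodCycle, circulantGraph_adj]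
    constructor
    · intro h
      push_cast at h
      exact one_ne_zero (α := ZMod n) (by linear_combination -h)
    · right
      rw [Set.mem_singleton_iff]
      push_cast
      ring
  have hreach : ∀ m : ℕ, (zmodCycle n).Reachable 0 (m : ZMod n) := by
    intro m
    induction m with
    | zero =>
      simp only [Nat.cast_zero]
      exact Reachable.refl 0
    | succ m ih => exact ih.trans (hadj m).reachable
  refine ⟨fun u v => ?_⟩
  have hu := hreach u.val
  have hv := hreach v.val
  rw [ZMod.natCast_rightInverse u] at hu
  rw [ZMod.natCast_rightInverse v] at hv
  exact hu.symm.trans hv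

lemma boxDist_le (n : ℕ) (h2 : 2 ≤ n) (a1 a2 b1 b2 : ZMod n) :
    cyc n (a1 - b1) + cyc n (a2 - b2) ≤ (zmodCycle n □ zmodCycle n).dist (a1, a2) (b1, b2) := by
  haveI : NeZero n := ⟨by omega⟩
  have hconn : (zmodCycle n □ zmodCycle n).Connected :=
    (connected_boxProd).mpr ⟨zmodCycle_connected n h2, zmodCycle_connected n h2⟩
  have key := le_dist hconn (fun x => cyc n (x.1 - b1) + cyc n (x.2 - b2)) ?_ (a1, a2) (b1, b2)
  · simpa [cyc] using key
  · rintro ⟨u1, u2⟩ ⟨v1, v2⟩ huv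
    rw [boxProd_adj] at huv
    rcases huv with ⟨ha, he⟩ | ⟨ha, he⟩ <;> simp only at ha he ⊢
    · have := cyc_adj n h2 b1 ha
      rw [he]
      omega
    · have := cyc_adj n h2 b2 ha
      rw [he]
      omega

lemma cyc_cast_sub (n : ℕ) [NeZero n] (x y m : ℕ) (hm : m < n)
    (h : x = y + m ∨ y = x + m) :
    cyc n ((x : ZMod n) - (y : ZMod n)) = min m (n - m) := by
  have key : ∀ a b : ℕ, a = b + m → cyc n ((a : ZMod n) - (b : ZMod n)) = min m (n - m) := by
    intro a b hab
    subst hab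
    have he : ((b + m : ℕ) : ZMod n) - (b : ZMod n) = ((m : ℕ) : ZMod n) := by push_cast; ring
    rw [he, cyc_natCast, Nat.mod_eq_of_lt hm]
  rcases h with h | h
  · exact key x y h
  · rw [show ((x : ZMod n) - y) = -((y : ZMod n) - x) by ring, cyc_neg]
    exact key y x h

lemma main_case {k : ℕ} (hk : 2 ≤ k) {x1 x2 y1 y2 cI cJ C : ℕ} (m1 m2 : ℕ)
    (hcJ : cJ = cI + C)
    (hm1 : m1 < 2 * k) (hm2 : m2 < 2 * k)
    (h1 : x1 = y1 + m1 ∨ y1 = x1 + m1) (h2 : x2 = y2 + m2 ∨ y2 = x2 + m2)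
    (hC : 2 * k + 1 ≤ min m1 (2 * k - m1) + min m2 (2 * k - m2) + C) :
    2 * k + 1 ≤ (zmodCycle (2 * k) □ zmodCycle (2 * k)).dist
        ((x1 : ZMod (2 * k)), (x2 : ZMod (2 * k))) ((y1 : ZMod (2 * k)), (y2 : ZMod (2 * k)))
      + (cJ - cI) := by
  haveI : NeZero (2 * k) := ⟨by omega⟩
  have hd := boxDist_le (2 * k) (by omega) (x1 : ZMod (2 * k)) x2 y1 y2
  rw [cyc_cast_sub _ _ _ _ hm1 h1, cyc_cast_sub _ _ _ _ hm2 h2] at hd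
  omega


lemma posEven_eq0 (n k i : ℕ) (h : i % 4 = 0) :
    posEven n k i
      = (((i / (2 * n) : ℕ) : ZMod n), ((k * (i / (2 * n)) + i / 4 % k : ℕ) : ZMod n)) := by
  rw [posEven, if_pos h]

lemma posEven_eq1 (n k i : ℕ) (h : i % 4 = 1) :
    posEven n k i
      = (((i / (2 * n) + k : ℕ) : ZMod n), ((k * (i / (2 * n)) + i / 4 % k + k : ℕ) : ZMod n)) := by
  rw [posEven, if_neg (by omega), if_pos h]

lemma posEven_eq2 (n k i : ℕ) (h : i % 4 = 2) :
    posEven n k i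
      = (((i / (2 * n) : ℕ) : ZMod n), ((k * (i / (2 * n)) + i / 4 % k + k : ℕ) : ZMod n)) := by
  rw [posEven, if_neg (by omega), if_neg (by omega), if_pos h]

lemma posEven_eq3 (n k i : ℕ) (h : i % 4 = 3) :
    posEven n k i
      = (((i / (2 * n) + k : ℕ) : ZMod n), ((k * (i / (2 * n)) + i / 4 % k : ℕ) : ZMod n)) := by
  rw [posEven, if_neg (by omega), if_neg (by omega), if_neg (by omega)]

lemma labelEven_eq (k i : ℕ) : labelEven k i = 1 + i / 2 * (k + 2) + i % 2 := by
  unfold labelEven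
  rcases Nat.mod_two_eq_zero_or_one i with h | h <;> simp [h]
  have h2 : (i - 1) / 2 = i / 2 := by omega
  rw [h2]
  omega

lemma div_mod_of (k a b t : ℕ) (hk : 0 < k) (hb : b < k) (ht : t = k * a + b) :
    t / k = a ∧ t % k = b := by
  subst ht
  constructor
  · rw [Nat.mul_add_div hk, Nat.div_eq_of_lt hb, Nat.add_zero]
  · rw [Nat.mul_add_mod, Nat.mod_eq_of_lt hb]

end RadioAux

namespace RadioAux

lemma case_d1 {k : ℕ} (hk : 2 ≤ k) (I J r s : ℕ)
    (hδ : J = I + 1)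
    (hrs : I / 4 = k * r + s) (hsk : s < k) (hrdef : I / 4 / k = r) (hsdef : I / 4 % k = s) :
    2 * k + 1 ≤
      (zmodCycle (2 * k) □ zmodCycle (2 * k)).dist (posEven (2 * k) k I) (posEven (2 * k) k J) +
        (labelEven k J - labelEven k I) := by
  have hdd : ∀ m : ℕ, m / (2 * (2 * k)) = m / 4 / k := by
    intro m; rw [Nat.div_div_eq_div_mul]; ring_nf
  have hlI : labelEven k I = 1 + I / 2 * (k + 2) + I % 2 := labelEven_eq k I
  have hlJ : labelEven k J = 1 + J / 2 * (k + 2) + J % 2 := labelEven_eq k J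
  rcases (by omega : I % 4 = 0 ∨ I % 4 = 1 ∨ I % 4 = 2 ∨ I % 4 = 3) with h4 | h4 | h4 | h4
  · have h4J : J % 4 = 1 := by omega
    have hq : J / 4 = I / 4 := by omega
    have hpi : posEven (2*k) k I = ((r : ZMod (2*k)), ((k*r + s : ℕ) : ZMod (2*k))) := by
      rw [posEven_eq0 _ _ _ h4, hdd, hrdef, hsdef]
    have hpj : posEven (2*k) k J
        = (((r + k : ℕ) : ZMod (2*k)), ((k*r + s + k : ℕ) : ZMod (2*k))) := by
      rw [posEven_eq1 _ _ _ h4J, hdd, hq, hrdef, hsdef]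
    have hcJ : labelEven k J = labelEven k I + 1 := by
      rw [hlI, hlJ, (by omega : J / 2 = I / 2), (by omega : J % 2 = 1),
        (by omega : I % 2 = 0)]
    rw [hpi, hpj]
    exact main_case hk k k hcJ (by omega) (by omega) (Or.inr (by omega)) (Or.inr (by omega))
      (by omega)
  · have h4J : J % 4 = 2 := by omega
    have hq : J / 4 = I / 4 := by omega
    have hpi : posEven (2*k) k I
        = (((r + k : ℕ) : ZMod (2*k)), ((k*r + s + k : ℕ) : ZMod (2*k))) := by
      rw [posEven_eq1 _ _ _ h4, hdd, hrdef, hsdef]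
    have hpj : posEven (2*k) k J
        = ((r : ZMod (2*k)), ((k*r + s + k : ℕ) : ZMod (2*k))) := by
      rw [posEven_eq2 _ _ _ h4J, hdd, hq, hrdef, hsdef]
    have hcJ : labelEven k J = labelEven k I + (k + 1) := by
      rw [hlI, hlJ, (by omega : J / 2 = I / 2 + 1), (by omega : J % 2 = 0),
        (by omega : I % 2 = 1)]
      ring
    rw [hpi, hpj]
    exact main_case hk k 0 hcJ (by omega) (by omega) (Or.inl (by omega)) (Or.inl (by omega))
      (by omega)
  · have h4J : J % 4 = 3 := by omega
    have hq : J / 4 = I / 4 := by omega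
    have hpi : posEven (2*k) k I
        = ((r : ZMod (2*k)), ((k*r + s + k : ℕ) : ZMod (2*k))) := by
      rw [posEven_eq2 _ _ _ h4, hdd, hrdef, hsdef]
    have hpj : posEven (2*k) k J
        = (((r + k : ℕ) : ZMod (2*k)), ((k*r + s : ℕ) : ZMod (2*k))) := by
      rw [posEven_eq3 _ _ _ h4J, hdd, hq, hrdef, hsdef]
    have hcJ : labelEven k J = labelEven k I + 1 := by
      rw [hlI, hlJ, (by omega : J / 2 = I / 2), (by omega : J % 2 = 1),
        (by omega : I % 2 = 0)]
    rw [hpi, hpj]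
    exact main_case hk k k hcJ (by omega) (by omega) (Or.inr (by omega)) (Or.inl (by omega))
      (by omega)
  · have h4J : J % 4 = 0 := by omega
    have hq : J / 4 = I / 4 + 1 := by omega
    have hpi : posEven (2*k) k I
        = (((r + k : ℕ) : ZMod (2*k)), ((k*r + s : ℕ) : ZMod (2*k))) := by
      rw [posEven_eq3 _ _ _ h4, hdd, hrdef, hsdef]
    have hcJ : labelEven k J = labelEven k I + (k + 1) := by
      rw [hlI, hlJ, (by omega : J / 2 = I / 2 + 1), (by omega : J % 2 = 0),
        (by omega : I % 2 = 1)]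
      ring
    have hmul : k * (r + 1) = k * r + k := by ring
    rcases (by omega : s + 1 = k ∨ s + 1 < k) with hs1 | hs1
    · obtain ⟨hjd, hjm⟩ := div_mod_of k (r+1) 0 (J/4) (by omega) (by omega) (by omega)
      have hpj : posEven (2*k) k J
          = (((r + 1 : ℕ) : ZMod (2*k)), ((k*(r+1) + 0 : ℕ) : ZMod (2*k))) := by
        rw [posEven_eq0 _ _ _ h4J, hdd, hjd, hjm]
      rw [hpi, hpj]
      exact main_case hk s 1 hcJ (by omega) (by omega) (Or.inl (by omega))
        (Or.inr (by omega)) (by omega)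
    · obtain ⟨hjd, hjm⟩ := div_mod_of k r (s+1) (J/4) (by omega) (by omega) (by omega)
      have hpj : posEven (2*k) k J
          = ((r : ZMod (2*k)), ((k*r + (s+1) : ℕ) : ZMod (2*k))) := by
        rw [posEven_eq0 _ _ _ h4J, hdd, hjd, hjm]
      rw [hpi, hpj]
      exact main_case hk k 1 hcJ (by omega) (by omega) (Or.inl (by omega))
        (Or.inr (by omega)) (by omega)

lemma case_d2 {k : ℕ} (hk : 2 ≤ k) (I J r s : ℕ)
    (hδ : J = I + 2)
    (hrs : I / 4 = k * r + s) (hsk : s < k) (hrdef : I / 4 / k = r) (hsdef : I / 4 % k = s) :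
    2 * k + 1 ≤
      (zmodCycle (2 * k) □ zmodCycle (2 * k)).dist (posEven (2 * k) k I) (posEven (2 * k) k J) +
        (labelEven k J - labelEven k I) := by
  have hdd : ∀ m : ℕ, m / (2 * (2 * k)) = m / 4 / k := by
    intro m; rw [Nat.div_div_eq_div_mul]; ring_nf
  have hlI : labelEven k I = 1 + I / 2 * (k + 2) + I % 2 := labelEven_eq k I
  have hlJ : labelEven k J = 1 + J / 2 * (k + 2) + J % 2 := labelEven_eq k J
  have hcJ : labelEven k J = labelEven k I + (k + 2) := by
    rw [hlI, hlJ, (by omega : J / 2 = I / 2 + 1), (by omega : J % 2 = I % 2)]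
    ring
  rcases (by omega : I % 4 = 0 ∨ I % 4 = 1 ∨ I % 4 = 2 ∨ I % 4 = 3) with h4 | h4 | h4 | h4
  · have h4J : J % 4 = 2 := by omega
    have hq : J / 4 = I / 4 := by omega
    have hpi : posEven (2*k) k I = ((r : ZMod (2*k)), ((k*r + s : ℕ) : ZMod (2*k))) := by
      rw [posEven_eq0 _ _ _ h4, hdd, hrdef, hsdef]
    have hpj : posEven (2*k) k J
        = ((r : ZMod (2*k)), ((k*r + s + k : ℕ) : ZMod (2*k))) := by
      rw [posEven_eq2 _ _ _ h4J, hdd, hq, hrdef, hsdef]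
    rw [hpi, hpj]
    exact main_case hk 0 k hcJ (by omega) (by omega) (Or.inl (by omega)) (Or.inr (by omega))
      (by omega)
  · have h4J : J % 4 = 3 := by omega
    have hq : J / 4 = I / 4 := by omega
    have hpi : posEven (2*k) k I
        = (((r + k : ℕ) : ZMod (2*k)), ((k*r + s + k : ℕ) : ZMod (2*k))) := by
      rw [posEven_eq1 _ _ _ h4, hdd, hrdef, hsdef]
    have hpj : posEven (2*k) k J
        = (((r + k : ℕ) : ZMod (2*k)), ((k*r + s : ℕ) : ZMod (2*k))) := by
      rw [posEven_eq3 _ _ _ h4J, hdd, hq, hrdef, hsdef]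
    rw [hpi, hpj]
    exact main_case hk 0 k hcJ (by omega) (by omega) (Or.inl (by omega)) (Or.inl (by omega))
      (by omega)
  · have h4J : J % 4 = 0 := by omega
    have hq : J / 4 = I / 4 + 1 := by omega
    have hpi : posEven (2*k) k I
        = ((r : ZMod (2*k)), ((k*r + s + k : ℕ) : ZMod (2*k))) := by
      rw [posEven_eq2 _ _ _ h4, hdd, hrdef, hsdef]
    have hmul : k * (r + 1) = k * r + k := by ring
    rcases (by omega : s + 1 = k ∨ s + 1 < k) with hs1 | hs1
    · obtain ⟨hjd, hjm⟩ := div_mod_of k (r+1) 0 (J/4) (by omega) (by omega) (by omega)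
      have hpj : posEven (2*k) k J
          = (((r + 1 : ℕ) : ZMod (2*k)), ((k*(r+1) + 0 : ℕ) : ZMod (2*k))) := by
        rw [posEven_eq0 _ _ _ h4J, hdd, hjd, hjm]
      rw [hpi, hpj]
      exact main_case hk 1 s hcJ (by omega) (by omega) (Or.inr (by omega))
        (Or.inl (by omega)) (by omega)
    · obtain ⟨hjd, hjm⟩ := div_mod_of k r (s+1) (J/4) (by omega) (by omega) (by omega)
      have hpj : posEven (2*k) k J
          = ((r : ZMod (2*k)), ((k*r + (s+1) : ℕ) : ZMod (2*k))) := by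
        rw [posEven_eq0 _ _ _ h4J, hdd, hjd, hjm]
      rw [hpi, hpj]
      exact main_case hk 0 (k-1) hcJ (by omega) (by omega) (Or.inl (by omega))
        (Or.inl (by omega)) (by omega)
  · have h4J : J % 4 = 1 := by omega
    have hq : J / 4 = I / 4 + 1 := by omega
    have hpi : posEven (2*k) k I
        = (((r + k : ℕ) : ZMod (2*k)), ((k*r + s : ℕ) : ZMod (2*k))) := by
      rw [posEven_eq3 _ _ _ h4, hdd, hrdef, hsdef]
    have hmul : k * (r + 1) = k * r + k := by ring
    rcases (by omega : s + 1 = k ∨ s + 1 < k) with hs1 | hs1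
    · obtain ⟨hjd, hjm⟩ := div_mod_of k (r+1) 0 (J/4) (by omega) (by omega) (by omega)
      have hpj : posEven (2*k) k J
          = (((r + 1 + k : ℕ) : ZMod (2*k)), ((k*(r+1) + 0 + k : ℕ) : ZMod (2*k))) := by
        rw [posEven_eq1 _ _ _ h4J, hdd, hjd, hjm]
      rw [hpi, hpj]
      exact main_case hk 1 (k+1) hcJ (by omega) (by omega) (Or.inr (by omega))
        (Or.inr (by omega)) (by omega)
    · obtain ⟨hjd, hjm⟩ := div_mod_of k r (s+1) (J/4) (by omega) (by omega) (by omega)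
      have hpj : posEven (2*k) k J
          = (((r + k : ℕ) : ZMod (2*k)), ((k*r + (s+1) + k : ℕ) : ZMod (2*k))) := by
        rw [posEven_eq1 _ _ _ h4J, hdd, hjd, hjm]
      rw [hpi, hpj]
      exact main_case hk 0 (k+1) hcJ (by omega) (by omega) (Or.inl (by omega))
        (Or.inr (by omega)) (by omega)

lemma case_d3 {k : ℕ} (hk : 2 ≤ k) (I J r s : ℕ)
    (hδ : J = I + 3 ∧ I % 2 = 0)
    (hrs : I / 4 = k * r + s) (hsk : s < k) (hrdef : I / 4 / k = r) (hsdef : I / 4 % k = s) :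
    2 * k + 1 ≤
      (zmodCycle (2 * k) □ zmodCycle (2 * k)).dist (posEven (2 * k) k I) (posEven (2 * k) k J) +
        (labelEven k J - labelEven k I) := by
  have hdd : ∀ m : ℕ, m / (2 * (2 * k)) = m / 4 / k := by
    intro m; rw [Nat.div_div_eq_div_mul]; ring_nf
  have hlI : labelEven k I = 1 + I / 2 * (k + 2) + I % 2 := labelEven_eq k I
  have hlJ : labelEven k J = 1 + J / 2 * (k + 2) + J % 2 := labelEven_eq k J
  obtain ⟨hδ, hpar⟩ := hδ
  have hcJ : labelEven k J = labelEven k I + (k + 3) := by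
    rw [hlI, hlJ, (by omega : J / 2 = I / 2 + 1), (by omega : J % 2 = 1),
      (by omega : I % 2 = 0)]
    ring
  rcases (by omega : I % 4 = 0 ∨ I % 4 = 2) with h4 | h4
  · have h4J : J % 4 = 3 := by omega
    have hq : J / 4 = I / 4 := by omega
    have hpi : posEven (2*k) k I = ((r : ZMod (2*k)), ((k*r + s : ℕ) : ZMod (2*k))) := by
      rw [posEven_eq0 _ _ _ h4, hdd, hrdef, hsdef]
    have hpj : posEven (2*k) k J
        = (((r + k : ℕ) : ZMod (2*k)), ((k*r + s : ℕ) : ZMod (2*k))) := by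
      rw [posEven_eq3 _ _ _ h4J, hdd, hq, hrdef, hsdef]
    rw [hpi, hpj]
    exact main_case hk k 0 hcJ (by omega) (by omega) (Or.inr (by omega)) (Or.inl (by omega))
      (by omega)
  · have h4J : J % 4 = 1 := by omega
    have hq : J / 4 = I / 4 + 1 := by omega
    have hpi : posEven (2*k) k I
        = ((r : ZMod (2*k)), ((k*r + s + k : ℕ) : ZMod (2*k))) := by
      rw [posEven_eq2 _ _ _ h4, hdd, hrdef, hsdef]
    have hmul : k * (r + 1) = k * r + k := by ring
    rcases (by omega : s + 1 = k ∨ s + 1 < k) with hs1 | hs1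
    · obtain ⟨hjd, hjm⟩ := div_mod_of k (r+1) 0 (J/4) (by omega) (by omega) (by omega)
      have hpj : posEven (2*k) k J
          = (((r + 1 + k : ℕ) : ZMod (2*k)), ((k*(r+1) + 0 + k : ℕ) : ZMod (2*k))) := by
        rw [posEven_eq1 _ _ _ h4J, hdd, hjd, hjm]
      rw [hpi, hpj]
      exact main_case hk (k+1) 1 hcJ (by omega) (by omega) (Or.inr (by omega))
        (Or.inr (by omega)) (by omega)
    · obtain ⟨hjd, hjm⟩ := div_mod_of k r (s+1) (J/4) (by omega) (by omega) (by omega)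
      have hpj : posEven (2*k) k J
          = (((r + k : ℕ) : ZMod (2*k)), ((k*r + (s+1) + k : ℕ) : ZMod (2*k))) := by
        rw [posEven_eq1 _ _ _ h4J, hdd, hjd, hjm]
      rw [hpi, hpj]
      exact main_case hk k 1 hcJ (by omega) (by omega) (Or.inr (by omega))
        (Or.inr (by omega)) (by omega)

end RadioAux

open RadioAux in
/-- for `n = 2k` with `k ≥ 2`, assigning label `c(i)` to vertex `p(i)` gives a
radio labeling of `C_n □ C_n`: for all `0 ≤ i < j ≤ n² - 1`,
`d(p(i), p(j)) + (c(j) - c(i)) ≥ 2k + 1`. -/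
theorem labelEven_posEven_radio (n k : ℕ) (hk : 2 ≤ k) (hn : n = 2 * k)
    (i j : Fin (n ^ 2)) (hij : (i : ℕ) < (j : ℕ)) :
    2 * k + 1 ≤
      (zmodCycle n □ zmodCycle n).dist (posEven n k i) (posEven n k j) +
        (labelEven k j - labelEven k i) := by
  subst hn
  set I := (i : ℕ) with hI
  set J := (j : ℕ) with hJ
  have hdd : ∀ m : ℕ, m / (2 * (2 * k)) = m / 4 / k := by
    intro m; rw [Nat.div_div_eq_div_mul]; ring_nf
  have hlI : labelEven k I = 1 + I / 2 * (k + 2) + I % 2 := labelEven_eq k I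
  have hlJ : labelEven k J = 1 + J / 2 * (k + 2) + J % 2 := labelEven_eq k J
  obtain ⟨r, s, hrs, hsk, hrdef, hsdef⟩ :
      ∃ r s, I / 4 = k * r + s ∧ s < k ∧ I / 4 / k = r ∧ I / 4 % k = s :=
    ⟨I / 4 / k, I / 4 % k, (Nat.div_add_mod (I / 4) k).symm, Nat.mod_lt _ (by omega), rfl, rfl⟩
  -- case split on j - i
  rcases (by omega : I / 2 + 2 ≤ J / 2 ∨ J = I + 1 ∨ J = I + 2 ∨ (J = I + 3 ∧ I % 2 = 0))
    with hbig | hδ | hδ | hδ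
  · have h3 : I / 2 * (k + 2) + 2 * (k + 2) ≤ J / 2 * (k + 2) := by
      calc I / 2 * (k + 2) + 2 * (k + 2) = (I / 2 + 2) * (k + 2) := by ring
        _ ≤ J / 2 * (k + 2) := Nat.mul_le_mul_right _ hbig
    omega
  · exact case_d1 hk I J r s hδ hrs hsk hrdef hsdef
  · exact case_d2 hk I J r s hδ hrs hsk hrdef hsdef
  · exact case_d3 hk I J r s hδ hrs hsk hrdef hsdef
end
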